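/- Theorem 5: Let G be a unidirected side information graph on n ≥ 1 vertices, i.e., for every pair of vertices i, j, if i ∈ A_j then j ∉ A_i (no bidirectional edges). Then every (t, r) index code for G satisfies r ≥ t·⌊log₂ n⌋, and consequently the broadcast rate satisfies β(G) ≥ ⌊log₂ n⌋. -/

import Mathlib

/-- A `(t, r)` index code for the side-information relation `E` on vertex type `V`:
an edge `i → j` (i.e., `E i j`) means that receiver `j` has message `i` as side
information.  Messages are `t`-bit strings `Fin t → Bool`, the broadcast index is an
`r`-bit string `Fin r → Bool`, and every receiver `j` can recover its message `x j`
from the index and its side information. -/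
structure IndexCode {V : Type*} (E : V → V → Prop) (t r : ℕ) where
  enc : (V → (Fin t → Bool)) → (Fin r → Bool)
  dec : ∀ j : V, (Fin r → Bool) → (({i : V // E i j}) → (Fin t → Bool)) → (Fin t → Bool)
  correct : ∀ (x : V → (Fin t → Bool)) (j : V),
    dec j (enc x) (fun i => x i.1) = x j

/-- The broadcast rate `β = inf { r / t : a (t, r) index code exists }`. -/
noncomputable def broadcastRate {V : Type*} (E : V → V → Prop) : ℝ :=
  sInf { q : ℝ | ∃ t r : ℕ, 0 < t ∧ Nonempty (IndexCode E t r) ∧ q = (r : ℝ) / t }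

open Classical in
/-- In a digraph with no 2-cycles, every vertex set of size at least `2^k - 1`
contains a "chain" `v₁, …, v_k` of distinct vertices with no edge from a later
vertex to an earlier one. -/
lemma chain_exists {n : ℕ} (E : Fin n → Fin n → Prop)
    (huni : ∀ i j : Fin n, E i j → ¬ E j i) :
    ∀ (k : ℕ) (A : Finset (Fin n)), 2 ^ k - 1 ≤ A.card →
      ∃ l : List (Fin n), l.length = k ∧ (∀ x ∈ l, x ∈ A) ∧
        l.Pairwise (fun x y => x ≠ y ∧ ¬ E y x) := by
  intro k
  induction k with
  | zero => intro A _; exact ⟨[], rfl, by simp, List.Pairwise.nil⟩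
  | succ k ih =>
    intro A hA
    have hpow : 2 ^ (k + 1) = 2 * 2 ^ k := by rw [pow_succ]; ring
    have hpos : 0 < A.card := by
      have : 0 < 2 ^ k := Nat.pow_pos (n := k) (by norm_num)
      omega
    obtain ⟨v, hv⟩ := Finset.card_pos.mp hpos
    set A' := A.erase v with hA'def
    have hA' : 2 ^ (k + 1) - 2 ≤ A'.card := by
      rw [hA'def, Finset.card_erase_of_mem hv]
      omega
    set B1 := A'.filter (fun u => ¬ E u v) with hB1
    set B2 := A'.filter (fun u => ¬ E v u) with hB2
    have hcover : A'.card ≤ B1.card + B2.card := by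
      have hsub : A' ⊆ B1 ∪ B2 := by
        intro u hu
        rcases Classical.em (E u v) with h | h
        · exact Finset.mem_union_right _ (Finset.mem_filter.mpr ⟨hu, huni u v h⟩)
        · exact Finset.mem_union_left _ (Finset.mem_filter.mpr ⟨hu, h⟩)
      calc A'.card ≤ (B1 ∪ B2).card := Finset.card_le_card hsub
        _ ≤ B1.card + B2.card := Finset.card_union_le _ _
    have hbig : 2 ^ k - 1 ≤ B1.card ∨ 2 ^ k - 1 ≤ B2.card := by
      by_contra h
      push_neg at h
      omega
    rcases hbig with hb | hb
    · -- put `v` first; all later vertices `u` satisfy `¬ E u v`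
      obtain ⟨l, hlen, hmem, hpw⟩ := ih B1 hb
      refine ⟨v :: l, by simp [hlen], ?_, ?_⟩
      · intro x hx
        rcases List.mem_cons.mp hx with h | h
        · exact h ▸ hv
        · exact Finset.mem_of_mem_erase (Finset.mem_of_mem_filter _ (hmem x h))
      · refine List.pairwise_cons.mpr ⟨?_, hpw⟩
        intro y hy
        have hyB : y ∈ B1 := hmem y hy
        have hy' := Finset.mem_filter.mp hyB
        exact ⟨(Finset.ne_of_mem_erase hy'.1).symm, hy'.2⟩
    · -- put `v` last; all earlier vertices `u` satisfy `¬ E v u`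
      obtain ⟨l, hlen, hmem, hpw⟩ := ih B2 hb
      refine ⟨l ++ [v], by simp [hlen], ?_, ?_⟩
      · intro x hx
        rcases List.mem_append.mp hx with h | h
        · exact Finset.mem_of_mem_erase (Finset.mem_of_mem_filter _ (hmem x h))
        · simp at h; exact h ▸ hv
      · refine List.pairwise_append.mpr ⟨hpw, by simp, ?_⟩
        intro x hx y hy
        simp at hy
        subst hy
        have hxB := Finset.mem_filter.mp (hmem x hx)
        exact ⟨Finset.ne_of_mem_erase hxB.1, hxB.2⟩

open Classical in
/-- Given a chain of `k` distinct vertices with no edges from later to earlier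
vertices, any `(t, r)` index code satisfies `t * k ≤ r`. -/
lemma code_lower {n t r k : ℕ} {E : Fin n → Fin n → Prop}
    (huni : ∀ i j : Fin n, E i j → ¬ E j i)
    (C : IndexCode E t r)
    (f : Fin k → Fin n) (hinj : Function.Injective f)
    (hchain : ∀ a b : Fin k, a < b → ¬ E (f b) (f a)) :
    t * k ≤ r := by
  -- extend a message assignment on the chain by zero elsewhere
  set X : (Fin k → Fin t → Bool) → (Fin n → Fin t → Bool) :=
    fun y i => if h : ∃ a, f a = i then y h.choose else fun _ => false with hX
  have hXf : ∀ y (a : Fin k), X y (f a) = y a := by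
    intro y a
    have h : ∃ b, f b = f a := ⟨a, rfl⟩
    have : h.choose = a := hinj h.choose_spec
    simp only [hX, dif_pos h, this]
  have hX0 : ∀ y i, (∀ a, f a ≠ i) → X y i = fun _ => false := by
    intro y i hi
    have h : ¬ ∃ a, f a = i := by push_neg; exact hi
    simp only [hX, dif_neg h]
  -- the encoder is injective on these assignments
  have hencinj : Function.Injective (fun y => C.enc (X y)) := by
    intro y y' henc
    simp only at henc
    have key : ∀ m : ℕ, ∀ j : Fin k, (j : ℕ) < m → y j = y' j := by
      intro m
      induction m with
      | zero => intro j hj; omega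
      | succ m ihm =>
        intro j hj
        rcases Nat.lt_succ_iff_lt_or_eq.mp hj with h | h
        · exact ihm j h
        -- the side information of `f j` agrees for `X y` and `X y'`
        have hside : (fun i : {i // E i (f j)} => X y i.1)
            = (fun i : {i // E i (f j)} => X y' i.1) := by
          funext i
          by_cases hp : ∃ a, f a = i.1
          · obtain ⟨a, ha⟩ := hp
            have hE : E (f a) (f j) := ha ▸ i.2
            have haj : a < j := by
              rcases lt_trichotomy a j with h1 | h1 | h1
              · exact h1
              · exact absurd hE (h1 ▸ fun hc => huni _ _ hc hc)
              · exact absurd hE (hchain j a h1)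
            have hya : y a = y' a := ihm a (by omega)
            rw [← ha, hXf, hXf, hya]
          · push_neg at hp
            rw [hX0 y i.1 hp, hX0 y' i.1 hp]
        calc y j = X y (f j) := (hXf y j).symm
          _ = C.dec (f j) (C.enc (X y)) (fun i => X y i.1) :=
              (C.correct (X y) (f j)).symm
          _ = C.dec (f j) (C.enc (X y')) (fun i => X y' i.1) := by
              rw [henc, hside]
          _ = X y' (f j) := C.correct (X y') (f j)
          _ = y' j := hXf y' j
    funext j
    exact key (j + 1) j (Nat.lt_succ_self _)
  have hcard := Fintype.card_le_of_injective _ hencinj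
  simp only [Fintype.card_fun, Fintype.card_bool, Fintype.card_fin] at hcard
  have : 2 ^ (t * k) ≤ 2 ^ r := by
    rw [pow_mul]
    exact hcard
  exact (Nat.pow_le_pow_iff_right (by norm_num)).mp this

/-- A trivial `(1, n)` index code: broadcast everything. -/
def trivCode (n : ℕ) (E : Fin n → Fin n → Prop) : IndexCode E 1 n where
  enc x := fun i => x i 0
  dec j idx _ := fun _ => idx j
  correct x j := by
    funext s
    have : s = 0 := Subsingleton.elim s 0
    rw [this]

/-- **Theorem 5.**  If `G` is a unidirected side information graph on `n ≥ 1` vertices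
(no bidirectional edges: `i ∈ A_j` implies `j ∉ A_i`), then every `(t, r)` index code
for `G` satisfies `r ≥ t * ⌊log₂ n⌋`, and hence `β(G) ≥ ⌊log₂ n⌋`. -/
theorem unidirected_lower_bound (n : ℕ) (hn : 1 ≤ n)
    (E : Fin n → Fin n → Prop)
    (huni : ∀ i j : Fin n, E i j → ¬ E j i) :
    (∀ t r : ℕ, 0 < t → Nonempty (IndexCode E t r) → t * Nat.log 2 n ≤ r) ∧
      (Nat.log 2 n : ℝ) ≤ broadcastRate E := by
  set k := Nat.log 2 n with hk
  have hpow : 2 ^ k ≤ n := Nat.pow_log_le_self 2 (by omega)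
  have part1 : ∀ t r : ℕ, 0 < t → Nonempty (IndexCode E t r) → t * k ≤ r := by
    intro t r ht ⟨C⟩
    obtain ⟨l, hlen, _, hpw⟩ := chain_exists E huni k Finset.univ
      (by simp [Finset.card_univ]; omega)
    have hnd : l.Nodup := hpw.imp fun h => h.1
    set f : Fin k → Fin n := fun a => l.get ⟨a, by rw [hlen]; exact a.2⟩ with hf
    have hinj : Function.Injective f := by
      intro a b hab
      have h := (List.nodup_iff_injective_get.mp hnd) hab
      have h2 : (a : ℕ) = b := by simpa using h
      exact Fin.ext h2
    have hchain : ∀ a b : Fin k, a < b → ¬ E (f b) (f a) := by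
      intro a b hab
      exact ((List.pairwise_iff_get.mp hpw) ⟨a, by omega⟩ ⟨b, by omega⟩ hab).2
    exact code_lower huni C f hinj hchain
  refine ⟨part1, ?_⟩
  have hne : { q : ℝ | ∃ t r : ℕ, 0 < t ∧ Nonempty (IndexCode E t r) ∧
      q = (r : ℝ) / t }.Nonempty := by
    exact ⟨(n : ℝ), 1, n, one_pos, ⟨trivCode n E⟩, by simp⟩
  refine le_csInf hne ?_
  rintro q ⟨t, r, ht, hC, rfl⟩
  have h1 : t * k ≤ r := part1 t r ht hC
  have ht' : (0 : ℝ) < t := by exact_mod_cast ht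
  rw [le_div_iff₀ ht']
  calc (k : ℝ) * t = ((t * k : ℕ) : ℝ) := by push_cast; ring
    _ ≤ r := by exact_mod_cast h1
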